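/- Let G = (V,E) be a finite simple graph and s : V → Bool. Say a vertex u is 'stable' if neither of the following holds: (Candidacy) s(u) = ⊥ and all neighbours v of u have s(v) = ⊥; (Withdrawal) s(u) = ⊤ and some neighbour v of u has s(v) = ⊤. If every vertex is stable, then β(s) = {u | s(u) = ⊤ and all neighbours of u have value ⊥} is a maximal independent set of G. -/
import Mathlib


def beta {V : Type*} (G : SimpleGraph V) (s : V → Bool) : Set V :=
  {u | s u = true ∧ ∀ v, G.Adj u v → s v = false}

theorem stmt_6 {V : Type*} [Fintype V] (G : SimpleGraph V) (s : V → Bool)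
    (hstable : ∀ u : V,
      ¬ (s u = false ∧ ∀ v, G.Adj u v → s v = false) ∧
      ¬ (s u = true ∧ ∃ v, G.Adj u v ∧ s v = true)) :
    (∀ u ∈ beta G s, ∀ v ∈ beta G s, ¬ G.Adj u v) ∧
    (∀ w : V, w ∉ beta G s → ∃ v ∈ beta G s, G.Adj w v) := by
  have htrue : ∀ u : V, s u = true → ∀ v, G.Adj u v → s v = false := by
    intro u hu v hv
    by_contra h
    exact (hstable u).2 ⟨hu, v, hv, by simpa using h⟩
  constructor
  · rintro u ⟨hu, hun⟩ v ⟨hv, _⟩ hadj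
    exact absurd hv (by simp [hun v hadj])
  · intro w hw
    rcases Bool.eq_false_or_eq_true (s w) with hwt | hws
    · exact absurd ⟨hwt, htrue w hwt⟩ hw
    · have : ¬ ∀ v, G.Adj w v → s v = false := fun h => (hstable w).1 ⟨hws, h⟩
      push_neg at this
      obtain ⟨v, hadj, hv⟩ := this
      have hv' : s v = true := by simpa using hv
      exact ⟨v, ⟨hv', htrue v hv'⟩, hadj⟩
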